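/- Let S be a nonempty finite type, μ a pmf on S, and M : S × S → [0,1] a row-stochastic matrix (for each i, Σ_j M(i,j) = 1). Let p be the pmf on paths x : {0,1,…,n} → S given by p(x) = μ(x_0) · ∏_{i=0}^{n−1} M(x_i, x_{i+1}) (a Markov chain). Fix indices s ≤ t with t+1 ≤ n. Then X_t is conditionally independent of the collection (X_i : i < s or i ≥ t+2) given the pair (X_s, X_{t+1}); concretely, for all values a, c, b of X_t, X_s, X_{t+1} and every assignment y to the coordinates outside [s, t+1]: P(X_t=a, X_s=c, X_{t+1}=b, X_out=y) · P(X_s=c, X_{t+1}=b) = P(X_t=a, X_s=c, X_{t+1}=b) · P(X_out=y, X_s=c, X_{t+1}=b), where X_out denotes the tuple (X_i : i < s or i ≥ t+2). -/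

import Mathlib

open scoped Classical

/-- The pmf of a Markov chain on paths `x : Fin (n+1) → S` with initial distribution `μ`
and transition matrix `M`. -/
noncomputable def pathP {S : Type} [Fintype S] (μ : S → ℝ) (M : S → S → ℝ) (n : ℕ)
    (x : Fin (n + 1) → S) : ℝ :=
  μ (x 0) * ∏ i : Fin n, M (x i.castSucc) (x i.succ)

/-- Probability of an event on path space. -/
noncomputable def PrPath {S : Type} [Fintype S] (μ : S → ℝ) (M : S → S → ℝ) (n : ℕ)
    (E : (Fin (n + 1) → S) → Prop) : ℝ :=
  ∑ x : Fin (n + 1) → S, if E x then pathP μ M n x else 0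

/-- Splice two paths: take `x` on the middle block `[s, t+1]` and `z` outside it. -/
def splice {S : Type} {n : ℕ} (s t : ℕ) (x z : Fin (n + 1) → S) : Fin (n + 1) → S :=
  fun i => if s ≤ i.1 ∧ i.1 ≤ t + 1 then x i else z i

lemma splice_mid {S : Type} {n : ℕ} (s t : ℕ) (x z : Fin (n + 1) → S)
    (i : Fin (n + 1)) (h1 : s ≤ i.1) (h2 : i.1 ≤ t + 1) :
    splice s t x z i = x i := by
  simp only [splice]; rw [if_pos ⟨h1, h2⟩]

lemma splice_out {S : Type} {n : ℕ} (s t : ℕ) (x z : Fin (n + 1) → S)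
    (i : Fin (n + 1)) (h : i.1 < s ∨ t + 2 ≤ i.1) :
    splice s t x z i = z i := by
  simp only [splice]; rw [if_neg (by omega)]

lemma splice_splice {S : Type} {n : ℕ} (s t : ℕ) (x z : Fin (n + 1) → S) :
    splice s t (splice s t x z) (splice s t z x) = x := by
  funext i
  by_cases h : s ≤ i.1 ∧ i.1 ≤ t + 1 <;> simp [splice, h]

lemma pathP_splice_mul {S : Type} [Fintype S] (μ : S → ℝ) (M : S → S → ℝ)
    (s t n : ℕ) (hst : s ≤ t) (htn : t + 1 ≤ n)
    (x z : Fin (n + 1) → S)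
    (hs : x ⟨s, by omega⟩ = z ⟨s, by omega⟩)
    (ht : x ⟨t + 1, by omega⟩ = z ⟨t + 1, by omega⟩) :
    pathP μ M n (splice s t x z) * pathP μ M n (splice s t z x)
      = pathP μ M n x * pathP μ M n z := by
  unfold pathP
  rw [mul_mul_mul_comm, mul_mul_mul_comm (μ (x 0))]
  congr 1
  · simp only [splice]
    by_cases h0 : s ≤ (0 : Fin (n + 1)).1 ∧ (0 : Fin (n + 1)).1 ≤ t + 1
    · rw [if_pos h0, if_pos h0]
    · rw [if_neg h0, if_neg h0, mul_comm]
  · rw [← Finset.prod_mul_distrib, ← Finset.prod_mul_distrib]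
    refine Finset.prod_congr rfl fun i _ => ?_
    have hcs : (i.castSucc : Fin (n + 1)).1 = i.1 := rfl
    have hsu : (i.succ : Fin (n + 1)).1 = i.1 + 1 := rfl
    by_cases h1 : s ≤ i.1 ∧ i.1 ≤ t + 1 <;>
      by_cases h2 : s ≤ i.1 + 1 ∧ i.1 + 1 ≤ t + 1
    · rw [splice_mid s t x z _ h1.1 h1.2, splice_mid s t x z _ h2.1 h2.2,
        splice_mid s t z x _ h1.1 h1.2, splice_mid s t z x _ h2.1 h2.2]
    · -- i.1 = t + 1
      have hit : i.1 = t + 1 := by omega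
      have hxz : x i.castSucc = z i.castSucc := by
        have : i.castSucc = (⟨t + 1, by omega⟩ : Fin (n + 1)) := by
          apply Fin.ext
          simp only [Fin.coe_castSucc, Fin.val_mk]
          omega
        rw [this]; exact ht
      rw [splice_mid s t x z _ h1.1 h1.2, splice_out s t x z _ (by omega),
        splice_mid s t z x _ h1.1 h1.2, splice_out s t z x _ (by omega), hxz]
      ring
    · -- i.1 + 1 = s
      have his : i.1 + 1 = s := by omega
      have hxz : x i.succ = z i.succ := by
        have : i.succ = (⟨s, by omega⟩ : Fin (n + 1)) := by
          apply Fin.ext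
          simp only [Fin.val_succ, Fin.val_mk]
          omega
        rw [this]; exact hs
      rw [splice_out s t x z _ (by omega), splice_mid s t x z _ (by omega) (by omega),
        splice_out s t z x _ (by omega), splice_mid s t z x _ (by omega) (by omega), hxz]
      ring
    · rw [splice_out s t x z _ (by omega), splice_out s t x z _ (by omega),
        splice_out s t z x _ (by omega), splice_out s t z x _ (by omega)]
      ring

lemma pair_sum_reindex {α : Type*} [Fintype α] (e : α × α → α × α)
    (he : Function.Involutive e) (f g : α → α → ℝ)
    (h : ∀ p : α × α, f p.1 p.2 = g (e p).1 (e p).2) :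
    (∑ x, ∑ z, f x z) = ∑ x, ∑ z, g x z := by
  calc (∑ x, ∑ z, f x z) = ∑ p : α × α, f p.1 p.2 :=
        (Fintype.sum_prod_type (f := fun p : α × α => f p.1 p.2)).symm
    _ = ∑ p : α × α, g (e p).1 (e p).2 := Finset.sum_congr rfl fun p _ => h p
    _ = ∑ p : α × α, g p.1 p.2 :=
        Equiv.sum_comp (Function.Involutive.toPerm e he) (fun q : α × α => g q.1 q.2)
    _ = ∑ x, ∑ z, g x z := Fintype.sum_prod_type (f := fun p : α × α => g p.1 p.2)

lemma ite_zero_mul_ite_zero' {P Q : Prop} [Decidable P] [Decidable Q] (a b : ℝ) :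
    (if P then a else 0) * (if Q then b else 0) = if P ∧ Q then a * b else 0 := by
  by_cases hP : P <;> by_cases hQ : Q <;> simp [hP, hQ]

/-- For a Markov chain, `X_t` is conditionally independent of the coordinates outside
`[s, t+1]` given `(X_s, X_{t+1})`, stated in cross-multiplied form. -/
theorem markov_conditional_independence {S : Type} [Fintype S] [Nonempty S]
    (μ : S → ℝ) (hμnn : ∀ i, 0 ≤ μ i) (hμ : ∑ i, μ i = 1)
    (M : S → S → ℝ) (hMnn : ∀ i j, 0 ≤ M i j) (hM1 : ∀ i j, M i j ≤ 1)
    (hrow : ∀ i, ∑ j, M i j = 1)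
    (n s t : ℕ) (hst : s ≤ t) (htn : t + 1 ≤ n)
    (a c b : S) (y : Fin (n + 1) → S) :
    PrPath μ M n (fun x => x ⟨t, by omega⟩ = a ∧ x ⟨s, by omega⟩ = c ∧ x ⟨t + 1, by omega⟩ = b
        ∧ ∀ i : Fin (n + 1), (i.1 < s ∨ t + 2 ≤ i.1) → x i = y i)
      * PrPath μ M n (fun x => x ⟨s, by omega⟩ = c ∧ x ⟨t + 1, by omega⟩ = b)
    = PrPath μ M n (fun x => x ⟨t, by omega⟩ = a ∧ x ⟨s, by omega⟩ = c ∧ x ⟨t + 1, by omega⟩ = b)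
      * PrPath μ M n (fun x => (∀ i : Fin (n + 1), (i.1 < s ∨ t + 2 ≤ i.1) → x i = y i)
          ∧ x ⟨s, by omega⟩ = c ∧ x ⟨t + 1, by omega⟩ = b) := by
  classical
  unfold PrPath
  rw [Finset.sum_mul_sum, Finset.sum_mul_sum]
  refine pair_sum_reindex
    (fun p : (Fin (n + 1) → S) × (Fin (n + 1) → S) =>
      (splice s t p.1 p.2, splice s t p.2 p.1)) ?_ _ _ ?_
  · intro p
    obtain ⟨x, z⟩ := p
    dsimp only
    rw [splice_splice s t x z, splice_splice s t z x]
  intro p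
  obtain ⟨x, z⟩ := p
  dsimp only
  set u := splice s t x z with hu
  set v := splice s t z x with hv
  have hus : u ⟨s, by omega⟩ = x ⟨s, by omega⟩ :=
    splice_mid s t x z _ (by simp only [Fin.val_mk]; omega) (by simp only [Fin.val_mk]; omega)
  have hut : u ⟨t, by omega⟩ = x ⟨t, by omega⟩ :=
    splice_mid s t x z _ (by simp only [Fin.val_mk]; omega) (by simp only [Fin.val_mk]; omega)
  have hub : u ⟨t + 1, by omega⟩ = x ⟨t + 1, by omega⟩ :=
    splice_mid s t x z _ (by simp only [Fin.val_mk]; omega) (by simp only [Fin.val_mk]; omega)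
  have hvs : v ⟨s, by omega⟩ = z ⟨s, by omega⟩ :=
    splice_mid s t z x _ (by simp only [Fin.val_mk]; omega) (by simp only [Fin.val_mk]; omega)
  have hvb : v ⟨t + 1, by omega⟩ = z ⟨t + 1, by omega⟩ :=
    splice_mid s t z x _ (by simp only [Fin.val_mk]; omega) (by simp only [Fin.val_mk]; omega)
  have hvout : ∀ i : Fin (n + 1), (i.1 < s ∨ t + 2 ≤ i.1) → v i = x i :=
    fun i hi => splice_out s t z x i hi
  have hiff : ((x ⟨t, by omega⟩ = a ∧ x ⟨s, by omega⟩ = c ∧ x ⟨t + 1, by omega⟩ = b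
        ∧ ∀ i : Fin (n + 1), (i.1 < s ∨ t + 2 ≤ i.1) → x i = y i)
      ∧ z ⟨s, by omega⟩ = c ∧ z ⟨t + 1, by omega⟩ = b)
      ↔ ((u ⟨t, by omega⟩ = a ∧ u ⟨s, by omega⟩ = c ∧ u ⟨t + 1, by omega⟩ = b)
      ∧ (∀ i : Fin (n + 1), (i.1 < s ∨ t + 2 ≤ i.1) → v i = y i)
        ∧ v ⟨s, by omega⟩ = c ∧ v ⟨t + 1, by omega⟩ = b) := by
    rw [hus, hut, hub, hvs, hvb]
    constructor
    · rintro ⟨⟨h1, h2, h3, h4⟩, h5, h6⟩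
      exact ⟨⟨h1, h2, h3⟩, fun i hi => (hvout i hi).trans (h4 i hi), h5, h6⟩
    · rintro ⟨⟨h1, h2, h3⟩, h4, h5, h6⟩
      exact ⟨⟨h1, h2, h3, fun i hi => ((hvout i hi).symm.trans (h4 i hi))⟩, h5, h6⟩
  by_cases h : (x ⟨t, by omega⟩ = a ∧ x ⟨s, by omega⟩ = c ∧ x ⟨t + 1, by omega⟩ = b
        ∧ ∀ i : Fin (n + 1), (i.1 < s ∨ t + 2 ≤ i.1) → x i = y i)
      ∧ z ⟨s, by omega⟩ = c ∧ z ⟨t + 1, by omega⟩ = b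
  · rw [if_pos h.1, if_pos h.2, if_pos (hiff.mp h).1, if_pos (hiff.mp h).2]
    have hxs : x ⟨s, by omega⟩ = z ⟨s, by omega⟩ := h.1.2.1.trans h.2.1.symm
    have hxt : x ⟨t + 1, by omega⟩ = z ⟨t + 1, by omega⟩ := h.1.2.2.1.trans h.2.2.symm
    exact (pathP_splice_mul μ M s t n hst htn x z hxs hxt).symm
  · have h' := fun hh => h (hiff.mpr hh)
    trans (0 : ℝ)
    · rcases not_and_or.mp h with h1 | h2
      · rw [if_neg h1, zero_mul]
      · rw [if_neg h2, mul_zero]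
    · symm
      rcases not_and_or.mp h' with h3 | h4
      · rw [if_neg h3, zero_mul]
      · rw [if_neg h4, mul_zero]
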